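/- Every eigenvalue λ of 𝒜 satisfies |λ| ≥ (1/(2‖A₀⁻¹‖)) · (√(‖A₀⁻¹D‖² + 4‖A₀⁻¹‖) − ‖A₀⁻¹D‖), where ‖A₀⁻¹D‖ is the operator norm on H_{1/2} and ‖A₀⁻¹‖ the operator norm on H. -/

import Mathlib

open scoped InnerProductSpace ComplexConjugate
open Filter

/-- Abstract setup for the second order equation `z̈ + A₀ z + D ż = 0`:
`Hhalf` plays the role of `H_{1/2} = 𝒟(A₀^{1/2})` with the norm `‖A₀^{1/2}·‖`, `H` is the
pivot Hilbert space and `Hm` is the dual `H_{-1/2}`; `ι : H_{1/2} → H` and `j : H → H_{-1/2}`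
are the (dense, injective, continuous) inclusions; the uniformly positive self-adjoint
operator `A₀` induces an isometric isomorphism `A₀ : H_{1/2} → H_{-1/2}`; the damping
operator `D : H_{1/2} → H_{-1/2}` is bounded, and `A₀^{-1/2} D A₀^{-1/2}` is self-adjoint
nonnegative, expressed via the duality pairing
`⟨u, z⟩_{H_{-1/2}×H_{1/2}} = ⟪A₀⁻¹ u, z⟫_{H_{1/2}}`. -/
structure BeamSetup (Hhalf H Hm : Type*)
    [NormedAddCommGroup Hhalf] [InnerProductSpace ℂ Hhalf] [CompleteSpace Hhalf]
    [NormedAddCommGroup H] [InnerProductSpace ℂ H] [CompleteSpace H]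
    [NormedAddCommGroup Hm] [InnerProductSpace ℂ Hm] [CompleteSpace Hm] : Type _ where
  ι : Hhalf →L[ℂ] H
  ι_inj : Function.Injective ι
  ι_dense : DenseRange ι
  j : H →L[ℂ] Hm
  j_inj : Function.Injective j
  A₀ : Hhalf ≃ₗᵢ[ℂ] Hm
  compat : ∀ (y : H) (z : Hhalf), ⟪A₀.symm (j y), z⟫_ℂ = ⟪y, ι z⟫_ℂ
  D : Hhalf →L[ℂ] Hm
  D_symm : ∀ z w : Hhalf, ⟪A₀.symm (D z), w⟫_ℂ = ⟪z, A₀.symm (D w)⟫_ℂ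
  D_nonneg : ∀ z : Hhalf, 0 ≤ (⟪A₀.symm (D z), z⟫_ℂ).re

namespace BeamSetup

variable {Hhalf H Hm : Type*}
    [NormedAddCommGroup Hhalf] [InnerProductSpace ℂ Hhalf] [CompleteSpace Hhalf]
    [NormedAddCommGroup H] [InnerProductSpace ℂ H] [CompleteSpace H]
    [NormedAddCommGroup Hm] [InnerProductSpace ℂ Hm] [CompleteSpace Hm]
    (S : BeamSetup Hhalf H Hm)

/-- `A₀⁻¹ : H_{-1/2} → H_{1/2}` as a continuous linear map. -/
noncomputable def Ai : Hm →L[ℂ] Hhalf :=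
  (S.A₀.symm.toContinuousLinearEquiv : Hm ≃L[ℂ] Hhalf)

/-- `A₀⁻¹ D` as a bounded operator on `H_{1/2}`. -/
noncomputable def T : Hhalf →L[ℂ] Hhalf := S.Ai.comp S.D

/-- `A₀⁻¹ : H → H_{1/2}`. -/
noncomputable def Ainv : H →L[ℂ] Hhalf := S.Ai.comp S.j

/-- `A₀⁻¹` considered as a bounded operator on `H_{1/2}`. -/
noncomputable def AinvR : Hhalf →L[ℂ] Hhalf := S.Ainv.comp S.ι

/-- `A₀⁻¹` considered as a bounded operator on `H`. -/
noncomputable def AinvH : H →L[ℂ] H := S.ι.comp S.Ainv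

/-- `λ` is an eigenvalue of the operator matrix `𝒜 = [[0, I], [-A₀, -D]]` with domain
`𝒟(𝒜) = {(z,w) ∈ H_{1/2} × H_{1/2} : A₀ z + D w ∈ H}`: there is a nonzero
`(z, ι w) ∈ 𝒟(𝒜)` (the domain condition being `j y = A₀ z + D w`, so that
`𝒜 (z, ι w) = (w, -y)`) with `𝒜 (z, ι w) = λ • (z, ι w)`. -/
def IsEigenvalue (lam : ℂ) : Prop :=
  ∃ (z w : Hhalf) (y : H), S.j y = S.A₀ z + S.D w ∧
    ((z, S.ι w) : Hhalf × H) ≠ 0 ∧ w = lam • z ∧ -y = lam • S.ι w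

/-- `λ` belongs to the resolvent set of `𝒜`: there is a bounded operator `R` on
`H_{1/2} × H` mapping onto `𝒟(𝒜)` which inverts `𝒜 - λ` from both sides. -/
def InResolvent (lam : ℂ) : Prop :=
  ∃ R : (Hhalf × H) →L[ℂ] (Hhalf × H),
    (∀ q : Hhalf × H, ∃ (z w : Hhalf) (y : H),
        R q = (z, S.ι w) ∧ S.j y = S.A₀ z + S.D w ∧
        ((w, -y) : Hhalf × H) - lam • ((z, S.ι w) : Hhalf × H) = q) ∧
    (∀ (z w : Hhalf) (y : H), S.j y = S.A₀ z + S.D w →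
        R (((w, -y) : Hhalf × H) - lam • ((z, S.ι w) : Hhalf × H)) = (z, S.ι w))


end BeamSetup

open BeamSetup

/-- Every eigenvalue `λ` of `𝒜` satisfies
`|λ| ≥ (1/(2‖A₀⁻¹‖)) (√(‖A₀⁻¹D‖² + 4‖A₀⁻¹‖) − ‖A₀⁻¹D‖)`, where `‖A₀⁻¹D‖` is the operator
norm on `H_{1/2}` and `‖A₀⁻¹‖` the operator norm on `H` (using that
`‖A₀⁻¹‖_{ℒ(H_{1/2})} = ‖A₀⁻¹‖_{ℒ(H)}`). -/
theorem statement6 {Hhalf H Hm : Type*}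
    [NormedAddCommGroup Hhalf] [InnerProductSpace ℂ Hhalf] [CompleteSpace Hhalf]
    [NormedAddCommGroup H] [InnerProductSpace ℂ H] [CompleteSpace H]
    [NormedAddCommGroup Hm] [InnerProductSpace ℂ Hm] [CompleteSpace Hm]
    (S : BeamSetup Hhalf H Hm) (hnorm : ‖S.AinvR‖ = ‖S.AinvH‖) (lam : ℂ)
    (h : S.IsEigenvalue lam) :
    (1 / (2 * ‖S.AinvH‖)) * (Real.sqrt (‖S.T‖ ^ 2 + 4 * ‖S.AinvH‖) - ‖S.T‖)
      ≤ ‖lam‖ := by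
  obtain ⟨z, w, y, hdom, hne, hw, hy⟩ := h
  have hz : z ≠ 0 := by
    intro hz0
    apply hne
    subst hz0
    simp [hw]
  have hAi : ∀ u : Hhalf, S.Ai (S.A₀ u) = u := by
    intro u; simp [BeamSetup.Ai]
  have hy' : y = -(lam ^ 2 • S.ι z) := by
    have h2 : -y = lam ^ 2 • S.ι z := by
      rw [hy, hw, map_smul, smul_smul]; ring_nf
    rw [← neg_neg y, h2]
  have key : z + lam • S.T z + lam ^ 2 • S.AinvR z = 0 := by
    have h1 : S.Ai (S.j y) = S.Ai (S.A₀ z) + S.Ai (S.D w) := by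
      rw [← map_add, hdom]
    have h2 : S.Ai (S.j y) = - (lam ^ 2 • S.AinvR z) := by
      rw [hy', map_neg, map_smul]
      simp [BeamSetup.AinvR, BeamSetup.Ainv]
    have h3 : S.Ai (S.D w) = lam • S.T z := by
      rw [hw, map_smul, map_smul]
      rfl
    rw [hAi z, h3, h2] at h1
    linear_combination (norm := module) -h1
  set t := ‖S.T‖ with ht
  set a := ‖S.AinvH‖ with ha
  set r := ‖lam‖ with hrr
  have hr0 : (0:ℝ) ≤ r := norm_nonneg lam
  have ht0 : (0:ℝ) ≤ t := norm_nonneg _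
  have hzpos : (0:ℝ) < ‖z‖ := norm_pos_iff.mpr hz
  have hbound : ‖z‖ ≤ r * t * ‖z‖ + r ^ 2 * a * ‖z‖ := by
    have hzeq : z = -(lam • S.T z + lam ^ 2 • S.AinvR z) := by
      linear_combination (norm := module) key
    calc ‖z‖ = ‖lam • S.T z + lam ^ 2 • S.AinvR z‖ := by
          conv_lhs => rw [hzeq]
          rw [norm_neg]
      _ ≤ ‖lam • S.T z‖ + ‖lam ^ 2 • S.AinvR z‖ := norm_add_le _ _
      _ ≤ r * t * ‖z‖ + r ^ 2 * a * ‖z‖ := by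
          gcongr ?_ + ?_
          · rw [norm_smul]
            calc ‖lam‖ * ‖S.T z‖ ≤ ‖lam‖ * (t * ‖z‖) := by
                  gcongr; exact S.T.le_opNorm z
              _ = r * t * ‖z‖ := by
                  simp only [← hrr]; ring
          · rw [norm_smul]
            calc ‖lam ^ 2‖ * ‖S.AinvR z‖ ≤ ‖lam ^ 2‖ * (‖S.AinvR‖ * ‖z‖) := by
                  gcongr; exact S.AinvR.le_opNorm z
              _ = r ^ 2 * a * ‖z‖ := by
                  rw [hnorm]
                  simp only [norm_pow, ← hrr]; ring
  have hkey : 1 ≤ r * t + r ^ 2 * a := by nlinarith [hzpos, hbound]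
  have hapos : (0:ℝ) < a := by
    rcases (norm_nonneg S.AinvH).lt_or_eq with h' | h'
    · rw [ha]; exact h'
    · exfalso
      have hAR : S.AinvR = 0 := norm_eq_zero.mp (hnorm.trans (ha.trans h'.symm))
      have hARz : S.AinvR z = 0 := by rw [hAR]; rfl
      have hιz : S.ι z ≠ 0 := fun hc => hz (S.ι_inj (by rw [hc, map_zero]))
      have hjz : S.j (S.ι z) ≠ 0 := fun hc => hιz (S.j_inj (by rw [hc, map_zero]))
      apply hjz
      have h5 : S.A₀.symm (S.j (S.ι z)) = 0 := hARz
      have h6 := congrArg S.A₀ h5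
      rwa [LinearIsometryEquiv.apply_symm_apply, map_zero] at h6
  have hsq : Real.sqrt (t ^ 2 + 4 * a) ≤ 2 * a * r + t := by
    have h1 : t ^ 2 + 4 * a ≤ (2 * a * r + t) ^ 2 := by nlinarith [hkey, hapos, hr0, ht0]
    calc Real.sqrt (t ^ 2 + 4 * a) ≤ Real.sqrt ((2 * a * r + t) ^ 2) := Real.sqrt_le_sqrt h1
      _ = 2 * a * r + t := Real.sqrt_sq (by positivity)
  have h2a : (0:ℝ) < 2 * a := by linarith
  rw [div_mul_eq_mul_div, one_mul, div_le_iff₀ h2a]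
  nlinarith [hsq]
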